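/- The decision problem PARTITION (given natural numbers z₁,…,z_M, decide whether some subset S ⊆ {1,…,M} satisfies Σ_{i∈S} z_i = Σ_{i∉S} z_i) reduces to LARGE-BISECTOR: setting x = z and y = 0, the ℓ^1-bisector of x and y in ℝ^M contains an open ball if and only if the PARTITION instance is a yes-instance. -/

import Mathlib

/-- Summing a pointwise function over a coordinate update. -/
lemma sum_update_aux {M : ℕ} (c : Fin M → ℝ) (i : Fin M) (t : ℝ) (ψ : Fin M → ℝ → ℝ) :
    ∑ j, ψ j (Function.update c i t j)
      = ψ i t + ∑ j ∈ Finset.univ.erase i, ψ j (c j) := by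
  rw [← Finset.add_sum_erase _ _ (Finset.mem_univ i), Function.update_self]
  congr 1
  refine Finset.sum_congr rfl fun j hj => ?_
  rw [Function.update_of_ne (Finset.ne_of_mem_erase hj)]

/-- Reduction of PARTITION to LARGE-BISECTOR: for natural numbers `z₁,…,z_M`, the `ℓ^1`
bisector of `x = z` and `y = 0` in `ℝ^M` contains an open ball if and only if some subset of
indices `T` satisfies `∑_{i∈T} z_i = ∑_{i∉T} z_i`. -/
theorem stmt14 (M : ℕ) (z : Fin M → ℕ) :
    (∃ (c : Fin M → ℝ) (ρ : ℝ), 0 < ρ ∧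
        Metric.ball c ρ ⊆ {w : Fin M → ℝ | ∑ i, |(z i : ℝ) - w i| = ∑ i, |w i|}) ↔
      ∃ T : Finset (Fin M), ∑ i ∈ T, z i = ∑ i ∈ Tᶜ, z i := by
  classical
  constructor
  · rintro ⟨c, ρ, hρ, hball⟩
    -- Key claim: each coordinate of the center is ≤ 0 or ≥ z i.
    have key : ∀ i : Fin M, c i ≤ 0 ∨ (z i : ℝ) ≤ c i := by
      intro i
      by_contra h
      push_neg at h
      obtain ⟨h1, h2⟩ := h
      set δ : ℝ := min ρ (min (c i) ((z i : ℝ) - c i)) / 2 with hδdef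
      have hδpos : 0 < δ := by
        apply div_pos _ (by norm_num)
        exact lt_min hρ (lt_min h1 (by linarith))
      have hδρ : δ < ρ := by
        have h' : min ρ (min (c i) ((z i : ℝ) - c i)) ≤ ρ := min_le_left _ _
        rw [hδdef]; linarith
      have hδc : δ ≤ c i := by
        have h' : min ρ (min (c i) ((z i : ℝ) - c i)) ≤ c i :=
          le_trans (min_le_right _ _) (min_le_left _ _)
        rw [hδdef]; linarith
      have hδz : δ ≤ (z i : ℝ) - c i := by
        have h' : min ρ (min (c i) ((z i : ℝ) - c i)) ≤ (z i : ℝ) - c i :=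
          le_trans (min_le_right _ _) (min_le_right _ _)
        rw [hδdef]; linarith
      have hmem : ∀ t : ℝ, |t - c i| < ρ → Function.update c i t ∈ Metric.ball c ρ := by
        intro t ht
        rw [Metric.mem_ball, dist_pi_lt_iff hρ]
        intro j
        rcases eq_or_ne j i with rfl | hj
        · simpa [Real.dist_eq, Function.update_self] using ht
        · simp [Function.update_of_ne hj, hρ]
      have heq : ∀ t : ℝ, |t - c i| < ρ →
          |(z i : ℝ) - t| + ∑ j ∈ Finset.univ.erase i, |(z j : ℝ) - c j|
            = |t| + ∑ j ∈ Finset.univ.erase i, |c j| := by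
        intro t ht
        have h0 := hball (hmem t ht)
        simp only [Set.mem_setOf_eq] at h0
        rwa [sum_update_aux c i t (fun j x => |(z j : ℝ) - x|),
             sum_update_aux c i t (fun j x => |x|)] at h0
      have habs1 : |(c i + δ) - c i| < ρ := by
        rw [abs_of_nonneg (by linarith)]; linarith
      have habs2 : |(c i - δ) - c i| < ρ := by
        rw [abs_of_nonpos (by linarith)]; linarith
      have e1 := heq (c i + δ) habs1
      have e2 := heq (c i - δ) habs2
      rw [abs_of_nonneg (by linarith : (0:ℝ) ≤ (z i : ℝ) - (c i + δ)),
          abs_of_nonneg (by linarith : (0:ℝ) ≤ c i + δ)] at e1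
      rw [abs_of_nonneg (by linarith : (0:ℝ) ≤ (z i : ℝ) - (c i - δ)),
          abs_of_nonneg (by linarith : (0:ℝ) ≤ c i - δ)] at e2
      linarith
    -- Now use the center itself.
    have hc := hball (Metric.mem_ball_self hρ)
    simp only [Set.mem_setOf_eq] at hc
    refine ⟨Finset.univ.filter fun i => (z i : ℝ) ≤ c i, ?_⟩
    set T : Finset (Fin M) := Finset.univ.filter fun i => (z i : ℝ) ≤ c i with hT
    have hmemT : ∀ i ∈ T, (z i : ℝ) ≤ c i := by
      intro i hi; rw [hT, Finset.mem_filter] at hi; exact hi.2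
    have hmemTc : ∀ i ∈ Tᶜ, c i ≤ 0 := by
      intro i hi
      rw [Finset.mem_compl, hT, Finset.mem_filter] at hi
      push_neg at hi
      rcases key i with h | h
      · exact h
      · exact absurd (hi (Finset.mem_univ i)) (not_lt.mpr h)
    rw [← Finset.sum_add_sum_compl T (fun i => |(z i : ℝ) - c i|),
        ← Finset.sum_add_sum_compl T (fun i => |c i|)] at hc
    have hzT : ∀ i ∈ T, |(z i : ℝ) - c i| = c i - (z i : ℝ) := by
      intro i hi
      rw [abs_of_nonpos (by linarith [hmemT i hi])]; ring
    have hcT : ∀ i ∈ T, |c i| = c i := by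
      intro i hi
      have hz0 : (0:ℝ) ≤ (z i : ℝ) := Nat.cast_nonneg _
      exact abs_of_nonneg (le_trans hz0 (hmemT i hi))
    have hzTc : ∀ i ∈ Tᶜ, |(z i : ℝ) - c i| = (z i : ℝ) - c i := by
      intro i hi
      have hz0 : (0:ℝ) ≤ (z i : ℝ) := Nat.cast_nonneg _
      exact abs_of_nonneg (by linarith [hmemTc i hi])
    have hcTc : ∀ i ∈ Tᶜ, |c i| = -c i := by
      intro i hi; exact abs_of_nonpos (hmemTc i hi)
    rw [Finset.sum_congr rfl hzT, Finset.sum_congr rfl hcT,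
        Finset.sum_congr rfl hzTc, Finset.sum_congr rfl hcTc] at hc
    have hreal : ∑ i ∈ T, (z i : ℝ) = ∑ i ∈ Tᶜ, (z i : ℝ) := by
      have e1 : ∑ i ∈ T, (c i - (z i : ℝ))
          = ∑ i ∈ T, c i - ∑ i ∈ T, (z i : ℝ) := Finset.sum_sub_distrib _ _
      have e2 : ∑ i ∈ Tᶜ, ((z i : ℝ) - c i)
          = ∑ i ∈ Tᶜ, (z i : ℝ) - ∑ i ∈ Tᶜ, c i := Finset.sum_sub_distrib _ _
      have e3 : ∑ i ∈ Tᶜ, (-c i) = -∑ i ∈ Tᶜ, c i := Finset.sum_neg_distrib _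
      rw [e1, e2, e3] at hc
      linarith
    exact_mod_cast hreal
  · rintro ⟨T, hT⟩
    refine ⟨fun i => if i ∈ T then (z i : ℝ) + 1 else -1, 1, one_pos, ?_⟩
    intro w hw
    simp only [Set.mem_setOf_eq]
    have hcoord : ∀ i : Fin M, |w i - (if i ∈ T then (z i : ℝ) + 1 else -1)| < 1 := by
      intro i
      have h1 : dist (w i) ((fun i => if i ∈ T then (z i : ℝ) + 1 else -1) i)
          ≤ dist w (fun i => if i ∈ T then (z i : ℝ) + 1 else -1) :=
        dist_le_pi_dist w (fun i => if i ∈ T then (z i : ℝ) + 1 else -1) i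
      have h2 := Metric.mem_ball.mp hw
      simpa [Real.dist_eq] using lt_of_le_of_lt h1 h2
    have hwT : ∀ i ∈ T, (z i : ℝ) < w i := by
      intro i hi
      have := hcoord i
      rw [if_pos hi] at this
      have := abs_lt.mp this
      linarith [this.1]
    have hwTc : ∀ i ∈ Tᶜ, w i < 0 := by
      intro i hi
      have hni : i ∉ T := Finset.mem_compl.mp hi
      have := hcoord i
      rw [if_neg hni] at this
      have := abs_lt.mp this
      linarith [this.2]
    rw [← Finset.sum_add_sum_compl T (fun i => |(z i : ℝ) - w i|),
        ← Finset.sum_add_sum_compl T (fun i => |w i|)]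
    have hzT : ∀ i ∈ T, |(z i : ℝ) - w i| = w i - (z i : ℝ) := by
      intro i hi
      rw [abs_of_nonpos (by linarith [hwT i hi])]; ring
    have hcT : ∀ i ∈ T, |w i| = w i := by
      intro i hi
      have hz0 : (0:ℝ) ≤ (z i : ℝ) := Nat.cast_nonneg _
      exact abs_of_nonneg (by linarith [hwT i hi])
    have hzTc : ∀ i ∈ Tᶜ, |(z i : ℝ) - w i| = (z i : ℝ) - w i := by
      intro i hi
      have hz0 : (0:ℝ) ≤ (z i : ℝ) := Nat.cast_nonneg _
      exact abs_of_nonneg (by linarith [hwTc i hi])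
    have hcTc : ∀ i ∈ Tᶜ, |w i| = -w i := by
      intro i hi; exact abs_of_nonpos (le_of_lt (hwTc i hi))
    rw [Finset.sum_congr rfl hzT, Finset.sum_congr rfl hcT,
        Finset.sum_congr rfl hzTc, Finset.sum_congr rfl hcTc]
    have hcast : ∑ i ∈ T, (z i : ℝ) = ∑ i ∈ Tᶜ, (z i : ℝ) := by
      exact_mod_cast congrArg (fun n : ℕ => (n : ℝ)) hT
    rw [Finset.sum_sub_distrib, Finset.sum_sub_distrib, Finset.sum_neg_distrib]
    linarith
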